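/- arXiv:1205.2984 — 4 statements merged into one kernel-verified Lean document; each statement's English description precedes it below -/
import Mathlib

section
/- The discriminant of the number field ℓ₂ = ℚ[x]/(x⁴ − x² − 1) equals −400; in particular its absolute value is 𝒟_{ℓ₂} = 400. -/
open Polynomial
set_option linter.unusedSectionVars false

namespace L2

local notation "fq" => (X ^ 4 - X ^ 2 - 1 : ℚ[X])

theorem fq_monic : (fq).Monic := by
  have h : (fq) = X ^ 4 - (X ^ 2 + 1) := by ring
  rw [h]
  apply monic_X_pow_sub
  exact lt_of_le_of_lt (by compute_degree!) (by norm_num : (3 : WithBot ℕ) < 4)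

theorem fq_natDegree : (fq).natDegree = 4 := by compute_degree!

theorem fq_ne_zero : (fq) ≠ 0 := fq_monic.ne_zero

variable [Fact (Irreducible (X ^ 4 - X ^ 2 - 1 : ℚ[X]))]

local notation "K" => AdjoinRoot (X ^ 4 - X ^ 2 - 1 : ℚ[X])
local notation "θ" => AdjoinRoot.root (X ^ 4 - X ^ 2 - 1 : ℚ[X])

theorem hrel : θ ^ 4 - θ ^ 2 - 1 = 0 := by
  have := AdjoinRoot.eval₂_root (fq)
  simpa using this

noncomputable def B : Module.Basis (Fin 4) ℚ K :=
  ((AdjoinRoot.powerBasis fq_ne_zero).basis.reindex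
    (finCongr (by simp [AdjoinRoot.powerBasis, fq_natDegree])))

theorem hB (i : Fin 4) : B i = θ ^ (i : ℕ) := by
  rw [B, Module.Basis.reindex_apply, PowerBasis.basis_eq_pow]
  simp [AdjoinRoot.powerBasis]
  rfl

noncomputable def el (a b c d : ℚ) : K :=
  algebraMap ℚ _ a + algebraMap ℚ _ b * θ + algebraMap ℚ _ c * θ ^ 2 +
    algebraMap ℚ _ d * θ ^ 3

theorem el_congr {a b c d a' b' c' d' : ℚ} (h1 : a = a') (h2 : b = b') (h3 : c = c')
    (h4 : d = d') : el a b c d = el a' b' c' d' := by rw [h1, h2, h3, h4]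

theorem el_one : el 1 0 0 0 = 1 := by simp [el]
theorem el_theta : el 0 1 0 0 = θ := by simp [el]
theorem el_theta2 : el 0 0 1 0 = θ ^ 2 := by simp [el]
theorem el_theta3 : el 0 0 0 1 = θ ^ 3 := by simp [el]
theorem el_theta4 : el 1 0 1 0 = θ ^ 4 := by
  simp only [el, map_zero, map_one, zero_mul, add_zero, zero_add, one_mul]
  linear_combination -hrel
theorem el_theta5 : el 0 1 0 1 = θ ^ 5 := by
  simp only [el, map_zero, map_one, zero_mul, add_zero, zero_add, one_mul]
  linear_combination -θ * hrel
theorem el_theta6 : el 1 0 2 0 = θ ^ 6 := by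
  simp only [el, map_zero, map_one, map_ofNat, zero_mul, add_zero, zero_add, one_mul]
  linear_combination -(θ ^ 2 + 1) * hrel

theorem el_sub (a b c d a' b' c' d' : ℚ) :
    el a b c d - el a' b' c' d' = el (a - a') (b - b') (c - c') (d - d') := by
  simp only [el, map_sub]; ring

theorem el_mul (a b c d a' b' c' d' : ℚ) :
    el a b c d * el a' b' c' d' =
      el (a * a' + (b * d' + c * c' + d * b') + d * d')
        ((a * b' + b * a') + (c * d' + d * c'))
        ((a * c' + b * b' + c * a') + (b * d' + c * c' + d * b') + 2 * (d * d'))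
        ((a * d' + b * c' + c * b' + d * a') + (c * d' + d * c')) := by
  simp only [el, map_add, map_mul, map_ofNat]
  linear_combination (algebraMap ℚ (AdjoinRoot (X ^ 4 - X ^ 2 - 1 : ℚ[X])) b *
      algebraMap ℚ _ d' + algebraMap ℚ _ c * algebraMap ℚ _ c' +
      algebraMap ℚ _ d * algebraMap ℚ _ b' +
      (algebraMap ℚ _ c * algebraMap ℚ _ d' + algebraMap ℚ _ d * algebraMap ℚ _ c') * θ +
      (algebraMap ℚ _ d * algebraMap ℚ _ d') * (θ ^ 2 + 1)) * hrel

theorem repr_el (a b c d : ℚ) (i : Fin 4) :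
    B.repr (el a b c d) i = ![a, b, c, d] i := by
  have hx : el a b c d = a • B 0 + b • B 1 + c • B 2 + d • B 3 := by
    simp only [hB, show ((0 : Fin 4) : ℕ) = 0 from rfl, show ((1 : Fin 4) : ℕ) = 1 from rfl,
      show ((2 : Fin 4) : ℕ) = 2 from rfl, show ((3 : Fin 4) : ℕ) = 3 from rfl]
    norm_num [el, Algebra.smul_def]
  rw [hx]
  simp only [map_add, map_smul, B.repr_self]
  fin_cases i <;> simp [Finsupp.single_apply]

variable [NumberField (AdjoinRoot (X ^ 4 - X ^ 2 - 1 : ℚ[X]))]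
attribute [local instance high] AdjoinRoot.instAlgebra

theorem el_mul_t1 (a b c d : ℚ) : el a b c d * θ ^ 1 = el d a (b + d) c := by
  rw [pow_one, ← el_theta, el_mul]; exact el_congr (by ring) (by ring) (by ring) (by ring)

theorem el_mul_t2 (a b c d : ℚ) : el a b c d * θ ^ 2 = el c d (a + c) (b + d) := by
  rw [← el_theta2, el_mul]; exact el_congr (by ring) (by ring) (by ring) (by ring)

theorem el_mul_t3 (a b c d : ℚ) :
    el a b c d * θ ^ 3 = el (b + d) c (b + 2 * d) (a + c) := by
  rw [← el_theta3, el_mul]; exact el_congr (by ring) (by ring) (by ring) (by ring)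

theorem trace_el (a b c d : ℚ) : Algebra.trace ℚ K (el a b c d) = 4 * a + 2 * c := by
  classical
  have h0 : el a b c d * θ ^ 0 = el a b c d := by rw [pow_zero, mul_one]
  erw [Algebra.trace_eq_matrix_trace B, Matrix.trace, Fin.sum_univ_four]
  simp only [Matrix.diag_apply, Algebra.leftMulMatrix_eq_repr_mul, hB,
    show ((0 : Fin 4) : ℕ) = 0 from rfl, show ((1 : Fin 4) : ℕ) = 1 from rfl,
    show ((2 : Fin 4) : ℕ) = 2 from rfl, show ((3 : Fin 4) : ℕ) = 3 from rfl,
    h0, el_mul_t1, el_mul_t2, el_mul_t3, repr_el]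
  norm_num [Matrix.cons_val_two, Matrix.cons_val_three]
  ring
theorem theta_int : IsIntegral ℤ θ := by
  refine ⟨X ^ 4 - X ^ 2 - 1, ?_, ?_⟩
  · have h : (X ^ 4 - X ^ 2 - 1 : ℤ[X]) = X ^ 4 - (X ^ 2 + 1) := by ring
    rw [h]
    apply monic_X_pow_sub
    exact lt_of_le_of_lt (by compute_degree!) (by norm_num : (3 : WithBot ℕ) < 4)
  · simp only [eval₂_sub, eval₂_pow, eval₂_X, eval₂_one]
    exact hrel

theorem Iq_trace {x : K} (hx : IsIntegral ℤ x) :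
    ∃ m : ℤ, (m : ℚ) = Algebra.trace ℚ K x := by
  have h : IsIntegral ℤ (Algebra.trace ℚ K x) := Algebra.isIntegral_trace hx
  exact IsIntegrallyClosed.isIntegral_iff.mp h

set_option maxRecDepth 4000 in
theorem zmodA : ∀ V0 V1 V2 V3 : ZMod 4,
    4*V0^2+2*V1^2+6*V2^2+8*V3^2+4*(V0*V2)+12*(V1*V3) = 0 → 2*(V1+V2) = 0 := by decide

set_option maxRecDepth 8000 in
theorem zmodK2 : ∀ V0 V1 V2 V3 : ZMod 4,
    2*(V1+V2) = 0 → 2*(V0+(V1+V3)) = 0 → 2*(V3+(V0+V2)) = 0 →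
    (2*(V0*V1)+2*(V2*V3) - 2*V1) + (V1*V1+2*(V0*V2)+V2*V2+2*(V1*V3)+2*(V3*V3) - 2*V2) = 0 →
    (V0*V0+V2*V2+2*(V1*V3)+V3*V3 - 2*V0) + (2*(V0*V1)+2*(V2*V3) - 2*V1) + (2*(V0*V3)+2*(V1*V2)+2*(V2*V3) - 2*V3) = 0 →
    (2*(V0*V3)+2*(V1*V2)+2*(V2*V3) - 2*V3) + (V0*V0+V2*V2+2*(V1*V3)+V3*V3 - 2*V0) + (V1*V1+2*(V0*V2)+V2*V2+2*(V1*V3)+2*(V3*V3) - 2*V2) = 0 →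
    2*V0 = 0 ∧ 2*V1 = 0 ∧ 2*V2 = 0 ∧ 2*V3 = 0 := by decide

set_option maxRecDepth 8000 in
theorem zmod5 : ∀ a b : ZMod 25, 20*a^2+15*b^2 = 0 → 5*a = 0 ∧ 5*b = 0 := by decide

theorem dvd2_of_zmod4 {x : ℤ} (h : ((2*x : ℤ) : ZMod 4) = 0) : 2 ∣ x := by
  have := (ZMod.intCast_zmod_eq_zero_iff_dvd _ 4).mp h; omega

theorem zmod4_of_dvd2 {x : ℤ} (h : 2 ∣ x) : ((2*x : ℤ) : ZMod 4) = 0 := by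
  apply (ZMod.intCast_zmod_eq_zero_iff_dvd _ 4).mpr; omega

theorem dvd5_of_zmod25 {x : ℤ} (h : ((5*x : ℤ) : ZMod 25) = 0) : 5 ∣ x := by
  have := (ZMod.intCast_zmod_eq_zero_iff_dvd _ 25).mp h; omega

theorem sqpar (u : ℤ) : 2 ∣ u*u - u := by
  obtain ⟨k, hk⟩ := Int.even_mul_succ_self (u-1)
  exact ⟨k, by linarith⟩

/-- Trace of the square of a half-integral element gives a mod-2 condition. -/
theorem condA (v0 v1 v2 v3 : ℤ)
    (hx : IsIntegral ℤ (el ((v0:ℚ)/2) ((v1:ℚ)/2) ((v2:ℚ)/2) ((v3:ℚ)/2))) :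
    2 ∣ v1 + v2 := by
  obtain ⟨m, hm⟩ := Iq_trace (hx.mul hx)
  rw [el_mul, trace_el] at hm
  have hZ : 4*m = 4*(v0*v0)+2*(v1*v1)+6*(v2*v2)+8*(v3*v3)+4*(v0*v2)+12*(v1*v3) := by
    have h : ((4*m : ℤ) : ℚ) =
        ((4*(v0*v0)+2*(v1*v1)+6*(v2*v2)+8*(v3*v3)+4*(v0*v2)+12*(v1*v3) : ℤ) : ℚ) := by
      push_cast
      linear_combination 4*hm
    exact_mod_cast h
  have h4 : ((4*(v0*v0)+2*(v1*v1)+6*(v2*v2)+8*(v3*v3)+4*(v0*v2)+12*(v1*v3) : ℤ) : ZMod 4) = 0 := by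
    apply (ZMod.intCast_zmod_eq_zero_iff_dvd _ 4).mpr
    exact ⟨m, by push_cast; linarith⟩
  push_cast at h4
  apply dvd2_of_zmod4
  push_cast
  have := zmodA (v0 : ZMod 4) (v1 : ZMod 4) (v2 : ZMod 4) (v3 : ZMod 4) (by linear_combination h4)
  linear_combination this

theorem half_shift (v0 v1 v2 v3 : ℤ)
    (hx : IsIntegral ℤ (el ((v0:ℚ)/2) ((v1:ℚ)/2) ((v2:ℚ)/2) ((v3:ℚ)/2))) :
    IsIntegral ℤ (el ((v3:ℚ)/2) ((v0:ℚ)/2) (((v1+v3:ℤ):ℚ)/2) ((v2:ℚ)/2)) := by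
  have h : el ((v0:ℚ)/2) ((v1:ℚ)/2) ((v2:ℚ)/2) ((v3:ℚ)/2) * θ ^ 1 =
      el ((v3:ℚ)/2) ((v0:ℚ)/2) (((v1+v3:ℤ):ℚ)/2) ((v2:ℚ)/2) := by
    rw [el_mul_t1]
    exact el_congr rfl rfl (by push_cast; ring) rfl
  rw [← h]
  exact hx.mul (theta_int.pow 1)

/-- The three mod-2 conditions on a half-integral algebraic integer. -/
theorem condABC (v0 v1 v2 v3 : ℤ)
    (hx : IsIntegral ℤ (el ((v0:ℚ)/2) ((v1:ℚ)/2) ((v2:ℚ)/2) ((v3:ℚ)/2))) :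
    2 ∣ v1 + v2 ∧ 2 ∣ v0 + (v1 + v3) ∧ 2 ∣ v3 + (v0 + v2) := by
  have h1 := half_shift _ _ _ _ hx
  have h2 := half_shift _ _ _ _ h1
  refine ⟨condA _ _ _ _ hx, condA _ _ _ _ h1, ?_⟩
  have := condA _ _ _ _ h2
  omega

/-- Kill the prime 2: a half-integral algebraic integer is integral. -/
theorem K2 (v0 v1 v2 v3 : ℤ)
    (hx : IsIntegral ℤ (el ((v0:ℚ)/2) ((v1:ℚ)/2) ((v2:ℚ)/2) ((v3:ℚ)/2))) :
    2 ∣ v0 ∧ 2 ∣ v1 ∧ 2 ∣ v2 ∧ 2 ∣ v3 := by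
  obtain ⟨A1, A2, A3⟩ := condABC _ _ _ _ hx
  -- the coordinates of x² (times 4)
  -- c0 = v0v0+v2v2+2v1v3+v3v3, c1 = 2(v0v1+v2v3),
  -- c2 = v1v1+2v0v2+v2v2+2v1v3+2v3v3, c3 = 2(v0v3+v1v2+v2v3)
  have hc0 : 2 ∣ v0*v0+v2*v2+2*(v1*v3)+v3*v3 - 2*v0 := by
    have e : v0*v0+v2*v2+2*(v1*v3)+v3*v3 - 2*v0 =
        (v0*v0-v0)+(v2*v2-v2)+(v3*v3-v3)+2*(v1*v3)+(v3+(v0+v2)) - 2*v0 := by ring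
    rw [e]
    have s0 := sqpar v0; have s2 := sqpar v2; have s3 := sqpar v3
    omega
  have hc2 : 2 ∣ v1*v1+2*(v0*v2)+v2*v2+2*(v1*v3)+2*(v3*v3) - 2*v2 := by
    have e : v1*v1+2*(v0*v2)+v2*v2+2*(v1*v3)+2*(v3*v3) - 2*v2 =
        (v1*v1-v1)+(v2*v2-v2)+(v1+v2)+2*(v0*v2)+2*(v1*v3)+2*(v3*v3) - 2*v2 := by ring
    rw [e]
    have s1 := sqpar v1; have s2 := sqpar v2
    omega
  obtain ⟨w0, hw0⟩ := hc0
  obtain ⟨w2, hw2⟩ := hc2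
  set w1 : ℤ := v0*v1+v2*v3 - v1 with hw1def
  set w3 : ℤ := v0*v3+v1*v2+v2*v3 - v3 with hw3def
  -- y = x² - x is an algebraic integer with coordinates wᵢ/2
  have hy : el ((v0:ℚ)/2) ((v1:ℚ)/2) ((v2:ℚ)/2) ((v3:ℚ)/2) *
      el ((v0:ℚ)/2) ((v1:ℚ)/2) ((v2:ℚ)/2) ((v3:ℚ)/2) -
      el ((v0:ℚ)/2) ((v1:ℚ)/2) ((v2:ℚ)/2) ((v3:ℚ)/2) =
      el ((w0:ℚ)/2) ((w1:ℚ)/2) ((w2:ℚ)/2) ((w3:ℚ)/2) := by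
    rw [el_mul, el_sub]
    have hq0 : ((v0:ℚ)*v0+v2*v2+2*(v1*v3)+v3*v3 - 2*v0 : ℚ) = 2*(w0:ℚ) := by
      exact_mod_cast congrArg (fun z : ℤ => (z : ℚ)) hw0
    have hq2 : ((v1:ℚ)*v1+2*(v0*v2)+v2*v2+2*(v1*v3)+2*(v3*v3) - 2*v2 : ℚ) = 2*(w2:ℚ) := by
      exact_mod_cast congrArg (fun z : ℤ => (z : ℚ)) hw2
    refine el_congr ?_ ?_ ?_ ?_
    · linear_combination hq0/4
    · push_cast [hw1def]; ring
    · linear_combination hq2/4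
    · push_cast [hw3def]; ring
  have hyint : IsIntegral ℤ (el ((w0:ℚ)/2) ((w1:ℚ)/2) ((w2:ℚ)/2) ((w3:ℚ)/2)) := by
    rw [← hy]
    exact (hx.mul hx).sub hx
  obtain ⟨B1, B2, B3⟩ := condABC _ _ _ _ hyint
  -- now transfer everything to ZMod 4 and finish by `decide`
  have a1 := zmod4_of_dvd2 A1
  have a2 := zmod4_of_dvd2 A2
  have a3 := zmod4_of_dvd2 A3
  have b1 := zmod4_of_dvd2 B1
  have b2 := zmod4_of_dvd2 B2
  have b3 := zmod4_of_dvd2 B3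
  have hw0' : ((v0*v0+v2*v2+2*(v1*v3)+v3*v3 - 2*v0 : ℤ) : ZMod 4) = 2*(w0 : ZMod 4) := by
    rw [hw0]; push_cast; ring
  have hw2' : ((v1*v1+2*(v0*v2)+v2*v2+2*(v1*v3)+2*(v3*v3) - 2*v2 : ℤ) : ZMod 4) =
      2*(w2 : ZMod 4) := by
    rw [hw2]; push_cast; ring
  push_cast at a1 a2 a3 b1 b2 b3 hw0' hw2'
  have key := zmodK2 (v0 : ZMod 4) (v1 : ZMod 4) (v2 : ZMod 4) (v3 : ZMod 4)
    (by linear_combination a1) (by linear_combination a2) (by linear_combination a3)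
    (by push_cast [hw1def] at b1 ⊢; linear_combination b1 + hw2')
    (by push_cast [hw1def, hw3def] at b2 ⊢; linear_combination b2 + hw0')
    (by push_cast [hw3def] at b3 ⊢; linear_combination b3 + hw0' + hw2')
  exact ⟨dvd2_of_zmod4 (by push_cast; linear_combination key.1),
    dvd2_of_zmod4 (by push_cast; linear_combination key.2.1),
    dvd2_of_zmod4 (by push_cast; linear_combination key.2.2.1),
    dvd2_of_zmod4 (by push_cast; linear_combination key.2.2.2)⟩


/-- Kill the prime 5: a (1/10)-integral algebraic integer has numerators divisible by 5. -/
theorem K5 (n0 n1 n2 n3 : ℤ)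
    (hx : IsIntegral ℤ (el ((n0:ℚ)/10) ((n1:ℚ)/10) ((n2:ℚ)/10) ((n3:ℚ)/10))) :
    5 ∣ n0 ∧ 5 ∣ n1 ∧ 5 ∣ n2 ∧ 5 ∣ n3 := by
  -- trace of x•θ gives 10 ∣ 2n1+6n3 ; trace of x•θ² gives 10 ∣ 2n0+6n2
  have hx1 : IsIntegral ℤ (el ((n0:ℚ)/10) ((n1:ℚ)/10) ((n2:ℚ)/10) ((n3:ℚ)/10) * θ ^ 1) :=
    hx.mul (theta_int.pow 1)
  have hx2 : IsIntegral ℤ (el ((n0:ℚ)/10) ((n1:ℚ)/10) ((n2:ℚ)/10) ((n3:ℚ)/10) * θ ^ 2) :=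
    hx.mul (theta_int.pow 2)
  obtain ⟨m1, hm1⟩ := Iq_trace hx1
  obtain ⟨m2, hm2⟩ := Iq_trace hx2
  rw [el_mul_t1, trace_el] at hm1
  rw [el_mul_t2, trace_el] at hm2
  have t1 : 10*m1 = 2*n1 + 6*n3 := by
    have h : ((10*m1 : ℤ) : ℚ) = ((2*n1 + 6*n3 : ℤ) : ℚ) := by
      push_cast; linear_combination 10*hm1
    exact_mod_cast h
  have t2 : 10*m2 = 2*n0 + 6*n2 := by
    have h : ((10*m2 : ℤ) : ℚ) = ((2*n0 + 6*n2 : ℤ) : ℚ) := by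
      push_cast; linear_combination 10*hm2
    exact_mod_cast h
  -- trace of x² gives 100 ∣ Q(n)
  obtain ⟨m, hm⟩ := Iq_trace (hx.mul hx)
  rw [el_mul, trace_el] at hm
  have tQ : 100*m = 4*(n0*n0)+2*(n1*n1)+6*(n2*n2)+8*(n3*n3)+4*(n0*n2)+12*(n1*n3) := by
    have h : ((100*m : ℤ) : ℚ) =
        ((4*(n0*n0)+2*(n1*n1)+6*(n2*n2)+8*(n3*n3)+4*(n0*n2)+12*(n1*n3) : ℤ) : ℚ) := by
      push_cast; linear_combination 100*hm
    exact_mod_cast h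
  have d2 : 5 ∣ n2 - 3*n0 := by omega
  have d1 : 5 ∣ n1 - 2*n3 := by omega
  obtain ⟨u, hu⟩ := d2
  obtain ⟨v, hv⟩ := d1
  have h25 : (25:ℤ) ∣ 20*(n0*n0) + 15*(n3*n3) := by
    refine ⟨4*m - 2*(n0*n0) - n3*n3 - 4*(n3*v) - 2*(v*v) - 8*(n0*u) - 6*(u*u), ?_⟩
    have hn2 : n2 = 3*n0 + 5*u := by linarith
    have hn1 : n1 = 2*n3 + 5*v := by linarith
    rw [hn2, hn1] at tQ
    nlinarith [tQ]
  have hz : ((20*(n0*n0) + 15*(n3*n3) : ℤ) : ZMod 25) = 0 :=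
    (ZMod.intCast_zmod_eq_zero_iff_dvd _ 25).mpr (by exact_mod_cast h25)
  push_cast at hz
  have key := zmod5 (n0 : ZMod 25) (n3 : ZMod 25) (by linear_combination hz)
  have k0 : 5 ∣ n0 := dvd5_of_zmod25 (by push_cast; linear_combination key.1)
  have k3 : 5 ∣ n3 := dvd5_of_zmod25 (by push_cast; linear_combination key.2)
  refine ⟨k0, ?_, ?_, k3⟩ <;> omega


theorem hxel (x : K) :
    x = el (B.repr x 0) (B.repr x 1) (B.repr x 2) (B.repr x 3) := by
  have h := B.sum_repr x
  rw [Fin.sum_univ_four] at h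
  conv_lhs => rw [← h]
  simp only [hB, show ((0 : Fin 4) : ℕ) = 0 from rfl, show ((1 : Fin 4) : ℕ) = 1 from rfl,
    show ((2 : Fin 4) : ℕ) = 2 from rfl, show ((3 : Fin 4) : ℕ) = 3 from rfl]
  simp [el, Algebra.smul_def]

/-- Main theorem: the coordinates of an algebraic integer in the power basis are integers. -/
theorem coords_int (x : K) (hx : IsIntegral ℤ x) (i : Fin 4) :
    ∃ m : ℤ, B.repr x i = (m : ℚ) := by
  set q0 := B.repr x 0 with hq0
  set q1 := B.repr x 1 with hq1
  set q2 := B.repr x 2 with hq2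
  set q3 := B.repr x 3 with hq3
  have hX : x = el q0 q1 q2 q3 := hxel x
  obtain ⟨m0, hm0⟩ := Iq_trace hx
  obtain ⟨m1, hm1⟩ := Iq_trace (hx.mul (theta_int.pow 1))
  obtain ⟨m2, hm2⟩ := Iq_trace (hx.mul (theta_int.pow 2))
  obtain ⟨m3, hm3⟩ := Iq_trace (hx.mul (theta_int.pow 3))
  rw [hX, trace_el] at hm0
  rw [hX, el_mul_t1, trace_el] at hm1
  rw [hX, el_mul_t2, trace_el] at hm2
  rw [hX, el_mul_t3, trace_el] at hm3
  obtain ⟨n0, hn0⟩ : ∃ n : ℤ, (n:ℚ) = 10*q0 := ⟨3*m0 - m2, by push_cast; linarith⟩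
  obtain ⟨n1, hn1⟩ : ∃ n : ℤ, (n:ℚ) = 10*q1 := ⟨3*m3 - 4*m1, by push_cast; linarith⟩
  obtain ⟨n2, hn2⟩ : ∃ n : ℤ, (n:ℚ) = 10*q2 := ⟨2*m2 - m0, by push_cast; linarith⟩
  obtain ⟨n3, hn3⟩ : ∃ n : ℤ, (n:ℚ) = 10*q3 := ⟨3*m1 - m3, by push_cast; linarith⟩
  have hX10 : x = el ((n0:ℚ)/10) ((n1:ℚ)/10) ((n2:ℚ)/10) ((n3:ℚ)/10) := by
    rw [hX]
    exact el_congr (by linarith) (by linarith) (by linarith) (by linarith)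
  obtain ⟨k0, k1, k2, k3⟩ := K5 n0 n1 n2 n3 (hX10 ▸ hx)
  obtain ⟨v0, hv0⟩ := k0
  obtain ⟨v1, hv1⟩ := k1
  obtain ⟨v2, hv2⟩ := k2
  obtain ⟨v3, hv3⟩ := k3
  have c0 : (n0:ℚ) = 5*(v0:ℚ) := by exact_mod_cast hv0
  have c1 : (n1:ℚ) = 5*(v1:ℚ) := by exact_mod_cast hv1
  have c2 : (n2:ℚ) = 5*(v2:ℚ) := by exact_mod_cast hv2
  have c3 : (n3:ℚ) = 5*(v3:ℚ) := by exact_mod_cast hv3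
  have hX2 : x = el ((v0:ℚ)/2) ((v1:ℚ)/2) ((v2:ℚ)/2) ((v3:ℚ)/2) := by
    rw [hX]
    exact el_congr (by linarith) (by linarith) (by linarith) (by linarith)
  obtain ⟨l0, l1, l2, l3⟩ := K2 v0 v1 v2 v3 (hX2 ▸ hx)
  obtain ⟨w0, hw0⟩ := l0
  obtain ⟨w1, hw1⟩ := l1
  obtain ⟨w2, hw2⟩ := l2
  obtain ⟨w3, hw3⟩ := l3
  have d0 : (v0:ℚ) = 2*(w0:ℚ) := by exact_mod_cast hw0
  have d1 : (v1:ℚ) = 2*(w1:ℚ) := by exact_mod_cast hw1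
  have d2 : (v2:ℚ) = 2*(w2:ℚ) := by exact_mod_cast hw2
  have d3 : (v3:ℚ) = 2*(w3:ℚ) := by exact_mod_cast hw3
  have hi : i = 0 ∨ i = 1 ∨ i = 2 ∨ i = 3 := by fin_cases i <;> simp
  rcases hi with rfl|rfl|rfl|rfl
  exacts [⟨w0, by linarith⟩, ⟨w1, by linarith⟩, ⟨w2, by linarith⟩, ⟨w3, by linarith⟩]


theorem T0 : Algebra.trace ℚ K ((θ:K) ^ 0) = 4 := by
  rw [pow_zero, ← el_one, trace_el]; norm_num
theorem T1 : Algebra.trace ℚ K ((θ:K) ^ 1) = 0 := by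
  rw [pow_one, ← el_theta, trace_el]; norm_num
theorem T2 : Algebra.trace ℚ K ((θ:K) ^ 2) = 2 := by
  rw [← el_theta2, trace_el]; norm_num
theorem T3 : Algebra.trace ℚ K ((θ:K) ^ 3) = 0 := by
  rw [← el_theta3, trace_el]; norm_num
theorem T4 : Algebra.trace ℚ K ((θ:K) ^ 4) = 6 := by
  rw [← el_theta4, trace_el]; norm_num
theorem T5 : Algebra.trace ℚ K ((θ:K) ^ 5) = 0 := by
  rw [← el_theta5, trace_el]; norm_num
theorem T6 : Algebra.trace ℚ K ((θ:K) ^ 6) = 8 := by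
  rw [← el_theta6, trace_el]; norm_num

theorem Ta : Algebra.trace ℚ K (1 : K) = 4 := by
  rw [← el_one, trace_el]; norm_num
theorem Tb : Algebra.trace ℚ K (θ : K) = 0 := by
  rw [← el_theta, trace_el]; norm_num

theorem P1 : ((θ:K)*θ) = θ^2 := by ring
theorem P2 : ((θ:K)*θ^2) = θ^3 := by ring
theorem P3 : ((θ:K)*θ^3) = θ^4 := by ring
theorem P4 : ((θ:K)^2*θ) = θ^3 := by ring
theorem P5 : ((θ:K)^3*θ) = θ^4 := by ring
theorem P6 : ((θ:K)^2*θ^2) = θ^4 := by ring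
theorem P7 : ((θ:K)^2*θ^3) = θ^5 := by ring
theorem P8 : ((θ:K)^3*θ^2) = θ^5 := by ring
theorem P9 : ((θ:K)^3*θ^3) = θ^6 := by ring

set_option maxHeartbeats 1000000 in
theorem hM : Algebra.traceMatrix ℚ (⇑B) =
    !![4,0,2,0; 0,2,0,6; 2,0,6,0; 0,6,0,8] := by
  ext i j
  fin_cases i <;> fin_cases j <;>
    simp only [Algebra.traceMatrix_apply, Algebra.traceForm_apply, hB] <;>
    norm_num [P1, P2, P3, P4, P5, P6, P7, P8, P9, T0, T1, T2, T3, T4, T5, T6, Ta, Tb]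

theorem hdet : (!![4,0,2,0; 0,2,0,6; 2,0,6,0; 0,6,0,8] : Matrix (Fin 4) (Fin 4) ℚ).det
    = -400 := by
  simp [Matrix.det_succ_row_zero, Fin.sum_univ_succ, Fin.succAbove]
  norm_num

theorem discr_eq : NumberField.discr K = -400 := by
  classical
  have h1 : ∀ i j, IsIntegral ℤ ((NumberField.integralBasis K).toMatrix (⇑B) i j) := by
    intro i j
    rw [Module.Basis.toMatrix_apply]
    have hint : IsIntegral ℤ (B j) := by rw [hB]; exact theta_int.pow _
    have : B j = algebraMap (NumberField.RingOfIntegers K) K ⟨B j, hint⟩ := rfl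
    erw [this, NumberField.integralBasis_repr_apply]
    exact isIntegral_algebraMap
  have h2 : ∀ i j, IsIntegral ℤ (B.toMatrix (⇑(NumberField.integralBasis K)) i j) := by
    intro i j
    rw [Module.Basis.toMatrix_apply]
    have hint : IsIntegral ℤ (NumberField.integralBasis K j) := by
      rw [NumberField.integralBasis_apply]
      exact NumberField.RingOfIntegers.isIntegral_coe _
    obtain ⟨m, hm⟩ := coords_int _ hint i
    rw [hm]
    exact isIntegral_algebraMap
  have heq := Algebra.discr_eq_discr_of_toMatrix_coeff_isIntegral K h1 h2
  have hQ : ((NumberField.discr K : ℤ) : ℚ) = -400 := by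
    rw [NumberField.coe_discr, heq, Algebra.discr_def]
    erw [hM, hdet]
  exact_mod_cast hQ

end L2

/-- The discriminant of the quartic number field `ℓ₂ = ℚ[x]/(x⁴ - x² - 1)` equals `-400`;
in particular its absolute value is `400`. -/
theorem stmt_2 [Fact (Irreducible (X ^ 4 - X ^ 2 - 1 : ℚ[X]))]
    [NumberField (AdjoinRoot (X ^ 4 - X ^ 2 - 1 : ℚ[X]))] :
    NumberField.discr (AdjoinRoot (X ^ 4 - X ^ 2 - 1 : ℚ[X])) = -400 ∧
    (NumberField.discr (AdjoinRoot (X ^ 4 - X ^ 2 - 1 : ℚ[X]))).natAbs = 400 := by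
  refine ⟨L2.discr_eq, ?_⟩
  rw [L2.discr_eq]
  rfl
end

section
/- In the number field ℓ₂ = ℚ[x]/(x⁴ − x² − 1), with α the image of x, the element s = (1 + α² + α)·(1 + α² − α)⁻¹ is a unit of the ring of integers of ℓ₂ (both s and s⁻¹ are algebraic integers), and s is totally positive: for every ring homomorphism φ : ℓ₂ → ℝ one has φ(s) > 0. -/
open Polynomial

/-- The quartic number field `ℓ₂ = ℚ[x]/(x⁴ - x² - 1)`. -/
abbrev ell2 : Type := AdjoinRoot (X ^ 4 - X ^ 2 - 1 : ℚ[X])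

/-- `α`, the image of `x` in `ℓ₂ = ℚ[x]/(x⁴ - x² - 1)`; it is a square root of
`ω = (1+√5)/2`. -/
noncomputable def alpha : ell2 := AdjoinRoot.root (X ^ 4 - X ^ 2 - 1 : ℚ[X])

lemma alpha_rel : alpha ^ 4 = alpha ^ 2 + 1 := by
  have h := AdjoinRoot.eval₂_root (X ^ 4 - X ^ 2 - 1 : ℚ[X])
  simp only [eval₂_sub, eval₂_pow, eval₂_X, eval₂_one] at h
  unfold alpha
  linear_combination h

/-- In `ℓ₂`, the element `s = π_w ⋅ (conjugate of π_w)⁻¹ = (1 + α² + α)(1 + α² - α)⁻¹`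
is a unit of the ring of integers of `ℓ₂` (both `s` and `s⁻¹` are algebraic integers),
and `s` is totally positive: every real embedding of `ℓ₂` sends `s` to a positive real. -/
theorem stmt_5 [Fact (Irreducible (X ^ 4 - X ^ 2 - 1 : ℚ[X]))] :
    IsIntegral ℤ ((1 + alpha ^ 2 + alpha) * (1 + alpha ^ 2 - alpha)⁻¹) ∧
    IsIntegral ℤ (((1 + alpha ^ 2 + alpha) * (1 + alpha ^ 2 - alpha)⁻¹)⁻¹) ∧
    ∀ φ : ell2 →+* ℝ, 0 < φ ((1 + alpha ^ 2 + alpha) * (1 + alpha ^ 2 - alpha)⁻¹) := by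
  have hr := alpha_rel
  set a := alpha with ha_def
  -- explicit inverse of the denominator
  have hdc : (1 + a ^ 2 - a) * ((1/2 : ell2) + a - (1/2) * a ^ 3) = 1 := by
    linear_combination (1/2 - a/2) * hr
  have hinv : (1 + a ^ 2 - a)⁻¹ = (1/2 : ell2) + a - (1/2) * a ^ 3 :=
    inv_eq_of_mul_eq_one_right hdc
  have hs : (1 + a ^ 2 + a) * (1 + a ^ 2 - a)⁻¹ = a + a ^ 2 := by
    rw [hinv]
    linear_combination (-1/2 - a/2) * hr
  -- s = a + a^2 is integral, root of X^4 - 2X^3 - 2X^2 - 2X + 1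
  have hint : IsIntegral ℤ (a + a ^ 2) := by
    refine ⟨X ^ 4 - 2 * X ^ 3 - 2 * X ^ 2 - 2 * X + 1, ?_, ?_⟩
    · monicity!
    · simp only [eval₂_add, eval₂_sub, eval₂_mul, eval₂_pow, eval₂_X, eval₂_one,
        eval₂_ofNat]
      linear_combination (-1 + 2*a + 5*a^2 + 4*a^3 + a^4) * hr
  have hst : (a + a ^ 2) * (2 + 2 * (a + a ^ 2) + 2 * (a + a ^ 2) ^ 2 - (a + a ^ 2) ^ 3) = 1 := by
    linear_combination (1 - 2*a - 5*a^2 - 4*a^3 - a^4) * hr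
  refine ⟨by rw [hs]; exact hint, ?_, ?_⟩
  · rw [hs, inv_eq_of_mul_eq_one_right hst]
    have h2 : IsIntegral ℤ (2 : ell2) := by
      have := isIntegral_algebraMap (R := ℤ) (A := ell2) (x := 2)
      simpa using this
    exact ((h2.add (h2.mul hint)).add (h2.mul (hint.pow 2))).sub (hint.pow 3)
  · intro φ
    rw [hs]
    have ha : (φ a) ^ 4 = (φ a) ^ 2 + 1 := by
      have := congrArg φ hr
      simpa using this
    have : 0 < φ a + (φ a) ^ 2 := by nlinarith [sq_nonneg (φ a), sq_nonneg (φ a + 1), sq_nonneg ((φ a) ^ 2 - 1), sq_nonneg ((φ a) ^ 2 + φ a)]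
    simpa using this
end

section
/- The quadratic form f₂(x) = −ω x₀² + x₁² + x₂² + x₃² + x₄² + x₅², where ω = (1+√5)/2, is anisotropic over ℚ(√5): if x₀, …, x₅ ∈ ℚ(√5) satisfy −ω x₀² + x₁² + ⋯ + x₅² = 0, then x₀ = x₁ = ⋯ = x₅ = 0. -/
noncomputable def K : IntermediateField ℚ ℝ := IntermediateField.adjoin ℚ {Real.sqrt 5}

lemma sqrt5_int : IsIntegral ℚ (Real.sqrt 5) := by
  refine ⟨Polynomial.X ^ 2 - Polynomial.C 5, Polynomial.monic_X_pow_sub_C _ (by norm_num), ?_⟩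
  simp [Real.sq_sqrt (by norm_num : (5:ℝ) ≥ 0)]

lemma mem_K {x : ℝ} (hx : x ∈ K) : ∃ a b : ℚ, x = a + b * Real.sqrt 5 := by
  have hs : Real.sqrt 5 * Real.sqrt 5 = 5 := Real.mul_self_sqrt (by norm_num)
  have hx' : x ∈ Algebra.adjoin ℚ {Real.sqrt 5} := by
    have := IntermediateField.adjoin_simple_toSubalgebra_of_isAlgebraic sqrt5_int.isAlgebraic
    have h2 : x ∈ (IntermediateField.adjoin ℚ {Real.sqrt 5}).toSubalgebra := hx
    rwa [this] at h2
  refine Algebra.adjoin_induction ?_ ?_ ?_ ?_ hx'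
  · rintro y rfl; exact ⟨0, 1, by simp⟩
  · intro r; exact ⟨r, 0, by simp⟩
  · rintro y z - - ⟨a, b, rfl⟩ ⟨c, d, rfl⟩
    exact ⟨a + c, b + d, by push_cast; ring⟩
  · rintro y z - - ⟨a, b, rfl⟩ ⟨c, d, rfl⟩
    refine ⟨a * c + 5 * b * d, a * d + b * c, ?_⟩
    push_cast
    linear_combination ((b:ℝ) * (d:ℝ)) * hs

lemma rat_pair (p q : ℚ) (h : (p:ℝ) + q * Real.sqrt 5 = 0) : p = 0 ∧ q = 0 := by
  have hirr : Irrational (Real.sqrt 5) := by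
    have := (by norm_num : Nat.Prime 5).irrational_sqrt
    simpa using this
  by_cases hq : q = 0
  · subst hq; simp at h; exact ⟨by exact_mod_cast h, rfl⟩
  · exfalso
    apply hirr
    refine ⟨-p / q, ?_⟩
    have hq' : (q:ℝ) ≠ 0 := by exact_mod_cast hq
    push_cast
    field_simp
    linarith

set_option maxHeartbeats 1600000 in
/-- The quadratic form `f₂(x) = -ω x₀² + x₁² + ⋯ + x₅²`, with `ω = (1+√5)/2`, is
anisotropic over `ℚ(√5)`: any solution of `f₂(x) = 0` with all coordinates in `ℚ(√5)`
is trivial. -/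
theorem stmt_6 :
    ∀ x : Fin 6 → ℝ, (∀ i, x i ∈ K) →
      -((1 + Real.sqrt 5) / 2) * x 0 ^ 2 + x 1 ^ 2 + x 2 ^ 2 + x 3 ^ 2 + x 4 ^ 2 + x 5 ^ 2 = 0 →
      ∀ i, x i = 0 := by
  intro x hmem h
  set s := Real.sqrt 5 with hsdef
  have hs : s * s = 5 := Real.mul_self_sqrt (by norm_num)
  have h2s : 2 < s := by
    rw [hsdef, show (2:ℝ) = Real.sqrt 4 by rw [show (4:ℝ) = 2^2 by norm_num, Real.sqrt_sq (by norm_num)]]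
    exact Real.sqrt_lt_sqrt (by norm_num) (by norm_num)
  obtain ⟨a0, b0, h0⟩ := mem_K (hmem 0)
  obtain ⟨a1, b1, h1⟩ := mem_K (hmem 1)
  obtain ⟨a2, b2, h2⟩ := mem_K (hmem 2)
  obtain ⟨a3, b3, h3⟩ := mem_K (hmem 3)
  obtain ⟨a4, b4, h4⟩ := mem_K (hmem 4)
  obtain ⟨a5, b5, h5⟩ := mem_K (hmem 5)
  rw [h0, h1, h2, h3, h4, h5] at h
  have hAB : ((-(a0^2 + 5*b0^2 + 10*a0*b0)/2 + (a1^2+5*b1^2) + (a2^2+5*b2^2) + (a3^2+5*b3^2) + (a4^2+5*b4^2) + (a5^2+5*b5^2) : ℚ) : ℝ)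
      + ((-(a0^2 + 5*b0^2 + 2*a0*b0)/2 + 2*a1*b1 + 2*a2*b2 + 2*a3*b3 + 2*a4*b4 + 2*a5*b5 : ℚ) : ℝ) * s = 0 := by
    push_cast
    linear_combination h + ((a0:ℝ)*b0 + (1+s)*(b0:ℝ)^2/2 - (b1:ℝ)^2 - (b2:ℝ)^2 - (b3:ℝ)^2 - (b4:ℝ)^2 - (b5:ℝ)^2) * hs
  obtain ⟨hA, hB⟩ := rat_pair _ _ hAB
  have hA' : -((a0:ℝ)^2 + 5*b0^2 + 10*a0*b0)/2 + ((a1:ℝ)^2+5*b1^2) + ((a2:ℝ)^2+5*b2^2) + ((a3:ℝ)^2+5*b3^2) + ((a4:ℝ)^2+5*b4^2) + ((a5:ℝ)^2+5*b5^2) = 0 := by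
    exact_mod_cast congrArg (Rat.cast : ℚ → ℝ) hA
  have hB' : -((a0:ℝ)^2 + 5*b0^2 + 2*a0*b0)/2 + 2*(a1:ℝ)*b1 + 2*(a2:ℝ)*b2 + 2*(a3:ℝ)*b3 + 2*(a4:ℝ)*b4 + 2*(a5:ℝ)*b5 = 0 := by
    exact_mod_cast congrArg (Rat.cast : ℚ → ℝ) hB
  have conj : ((s-1)/2) * ((a0:ℝ) - b0*s)^2 + ((a1:ℝ) - b1*s)^2 + ((a2:ℝ) - b2*s)^2 + ((a3:ℝ) - b3*s)^2 + ((a4:ℝ) - b4*s)^2 + ((a5:ℝ) - b5*s)^2 = 0 := by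
    linear_combination hA' - s * hB' + ((b1:ℝ)^2 + (b2:ℝ)^2 + (b3:ℝ)^2 + (b4:ℝ)^2 + (b5:ℝ)^2 - (a0:ℝ)*b0 + (s-1)*(b0:ℝ)^2/2) * hs
  have hcoef : 0 < (s-1)/2 := by linarith
  have t1 : (0:ℝ) ≤ ((a1:ℝ) - b1*s)^2 := sq_nonneg _
  have t2 : (0:ℝ) ≤ ((a2:ℝ) - b2*s)^2 := sq_nonneg _
  have t3 : (0:ℝ) ≤ ((a3:ℝ) - b3*s)^2 := sq_nonneg _
  have t4 : (0:ℝ) ≤ ((a4:ℝ) - b4*s)^2 := sq_nonneg _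
  have t5 : (0:ℝ) ≤ ((a5:ℝ) - b5*s)^2 := sq_nonneg _
  have t0 : (0:ℝ) ≤ ((s-1)/2) * ((a0:ℝ) - b0*s)^2 := mul_nonneg hcoef.le (sq_nonneg _)
  have q0 : ((a0:ℝ) - b0*s)^2 = 0 := by
    have hz : ((s-1)/2) * ((a0:ℝ) - b0*s)^2 = 0 := by linarith
    exact (mul_eq_zero.mp hz).resolve_left (ne_of_gt hcoef)
  have q1 : ((a1:ℝ) - b1*s)^2 = 0 := by linarith
  have q2 : ((a2:ℝ) - b2*s)^2 = 0 := by linarith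
  have q3 : ((a3:ℝ) - b3*s)^2 = 0 := by linarith
  have q4 : ((a4:ℝ) - b4*s)^2 = 0 := by linarith
  have q5 : ((a5:ℝ) - b5*s)^2 = 0 := by linarith
  have z : ∀ (a b : ℚ), ((a:ℝ) - b*s)^2 = 0 → a = 0 ∧ b = 0 := by
    intro a b hq
    have h0 : (a:ℝ) - b*s = 0 := pow_eq_zero_iff two_ne_zero |>.mp hq
    obtain ⟨ha, hb⟩ := rat_pair a (-b) (by push_cast; linarith)
    exact ⟨ha, neg_eq_zero.mp hb⟩
  obtain ⟨ea0, eb0⟩ := z _ _ q0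
  obtain ⟨ea1, eb1⟩ := z _ _ q1
  obtain ⟨ea2, eb2⟩ := z _ _ q2
  obtain ⟨ea3, eb3⟩ := z _ _ q3
  obtain ⟨ea4, eb4⟩ := z _ _ q4
  obtain ⟨ea5, eb5⟩ := z _ _ q5
  intro i
  fin_cases i <;>
    simp [h0, h1, h2, h3, h4, h5, ea0, ea1, ea2, ea3, ea4, ea5, eb0, eb1, eb2, eb3, eb4, eb5]
end

section
/- The quadratic form f₀(x) = −(3 + 2√5) x₀² + x₁² + x₂² + x₃² + x₄² + x₅² is anisotropic over ℚ(√5): if x₀, …, x₅ ∈ ℚ(√5) satisfy −(3+2√5) x₀² + x₁² + ⋯ + x₅² = 0, then x₀ = x₁ = ⋯ = x₅ = 0. -/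
set_option maxHeartbeats 1000000

lemma sqrt5_irr : Irrational (Real.sqrt 5) :=
  Nat.Prime.irrational_sqrt (by norm_num)

lemma sqrt5_sq : Real.sqrt 5 ^ 2 = 5 := Real.sq_sqrt (by norm_num)

lemma rat_rel {p q : ℚ} (h : (p : ℝ) + q * Real.sqrt 5 = 0) : p = 0 ∧ q = 0 := by
  by_cases hq : q = 0
  · subst hq; simp at h; exact ⟨by exact_mod_cast h, rfl⟩
  · exfalso
    apply sqrt5_irr
    refine ⟨-p / q, ?_⟩
    push_cast
    have hq' : (q : ℝ) ≠ 0 := by exact_mod_cast hq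
    field_simp
    linarith

lemma mem_K_repr {y : ℝ} (hy : y ∈ K) : ∃ a b : ℚ, y = a + b * Real.sqrt 5 := by
  have s5 := sqrt5_sq
  set s := Real.sqrt 5 with hs
  let S : Subfield ℝ :=
  { carrier := {y | ∃ a b : ℚ, y = a + b * s}
    one_mem' := ⟨1, 0, by norm_num⟩
    zero_mem' := ⟨0, 0, by norm_num⟩
    mul_mem' := by
      rintro x y ⟨a, b, rfl⟩ ⟨c, d, rfl⟩
      exact ⟨a * c + 5 * b * d, a * d + b * c, by push_cast; linear_combination (b:ℝ) * d * s5⟩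
    add_mem' := by
      rintro x y ⟨a, b, rfl⟩ ⟨c, d, rfl⟩
      exact ⟨a + c, b + d, by push_cast; ring⟩
    neg_mem' := by
      rintro x ⟨a, b, rfl⟩
      exact ⟨-a, -b, by push_cast; ring⟩
    inv_mem' := by
      rintro x ⟨a, b, rfl⟩
      by_cases hx : (a : ℝ) + b * s = 0
      · rw [hx]; exact ⟨0, 0, by norm_num⟩
      · have hd : (a : ℚ)^2 - 5 * b^2 ≠ 0 := by
          intro h0
          apply hx
          have h0' : (a : ℝ)^2 - 5 * b^2 = 0 := by exact_mod_cast h0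
          have : ((a:ℝ) + b * s) * ((a:ℝ) - b * s) = 0 := by
            linear_combination h0' - (b:ℝ)^2 * s5
          rcases mul_eq_zero.mp this with h | h
          · exact h
          · by_cases hb : (b:ℝ) = 0
            · rw [hb] at h ⊢; simpa using h
            · exfalso
              apply sqrt5_irr
              refine ⟨a / b, ?_⟩
              push_cast
              field_simp
              linarith
        have hd' : ((a:ℝ)^2 - 5*b^2) ≠ 0 := by exact_mod_cast hd
        refine ⟨a / (a^2 - 5*b^2), -b / (a^2 - 5*b^2), ?_⟩
        refine inv_eq_of_mul_eq_one_right ?_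
        push_cast
        field_simp
        linear_combination (-(b:ℝ)^2 * ((a:ℝ)^2 - 5*(b:ℝ)^2)⁻¹) * s5 + mul_inv_cancel₀ hd' }
  have hsub : Real.sqrt 5 ∈ S := ⟨0, 1, by norm_num [hs]⟩
  have hK : K ≤ S.toIntermediateField (fun q => ⟨q, 0, by norm_num⟩) := by
    apply IntermediateField.adjoin_le_iff.mpr
    intro z hz
    rcases hz with rfl
    exact hsub
  exact hK hy

/-- The quadratic form `f₀(x) = -(3 + 2√5) x₀² + x₁² + ⋯ + x₅²` is anisotropic over
`ℚ(√5)`: any solution of `f₀(x) = 0` with all coordinates in `ℚ(√5)` is trivial. -/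
theorem stmt_11 :
    ∀ x : Fin 6 → ℝ, (∀ i, x i ∈ K) →
      -(3 + 2 * Real.sqrt 5) * x 0 ^ 2 + x 1 ^ 2 + x 2 ^ 2 + x 3 ^ 2 + x 4 ^ 2 + x 5 ^ 2 = 0 →
      ∀ i, x i = 0 := by
  intro x hx hE
  have s5 := sqrt5_sq
  set s := Real.sqrt 5 with hs
  choose a b hab using fun i => mem_K_repr (hx i)
  have hE' : ((-3*(a 0)^2 - 15*(b 0)^2 - 20*(a 0)*(b 0)
      + ((a 1)^2 + (a 2)^2 + (a 3)^2 + (a 4)^2 + (a 5)^2)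
      + 5*((b 1)^2 + (b 2)^2 + (b 3)^2 + (b 4)^2 + (b 5)^2) : ℚ) : ℝ)
      + ((-2*(a 0)^2 - 10*(b 0)^2 - 6*(a 0)*(b 0)
      + 2*((a 1)*(b 1) + (a 2)*(b 2) + (a 3)*(b 3) + (a 4)*(b 4) + (a 5)*(b 5)) : ℚ) : ℝ) * s
      = 0 := by
    rw [hab 0, hab 1, hab 2, hab 3, hab 4, hab 5] at hE
    push_cast
    linear_combination hE + (3*(b 0 : ℝ)^2 + 4*(a 0 : ℝ)*(b 0 : ℝ)
      - ((b 1:ℝ)^2 + (b 2:ℝ)^2 + (b 3:ℝ)^2 + (b 4:ℝ)^2 + (b 5:ℝ)^2) + 2*(b 0:ℝ)^2 * s) * s5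
  obtain ⟨hP0, hQ0⟩ := rat_rel hE'
  have hP0' : (-3*((a 0 : ℝ))^2 - 15*((b 0 : ℝ))^2 - 20*(a 0 : ℝ)*(b 0 : ℝ)
      + (((a 1 : ℝ))^2 + ((a 2 : ℝ))^2 + ((a 3 : ℝ))^2 + ((a 4 : ℝ))^2 + ((a 5 : ℝ))^2)
      + 5*(((b 1 : ℝ))^2 + ((b 2 : ℝ))^2 + ((b 3 : ℝ))^2 + ((b 4 : ℝ))^2 + ((b 5 : ℝ))^2)) = 0 := by
    exact_mod_cast congrArg (fun t : ℚ => (t : ℝ)) hP0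
  have hQ0' : (-2*((a 0 : ℝ))^2 - 10*((b 0 : ℝ))^2 - 6*(a 0 : ℝ)*(b 0 : ℝ)
      + 2*((a 1 : ℝ)*(b 1 : ℝ) + (a 2 : ℝ)*(b 2 : ℝ) + (a 3 : ℝ)*(b 3 : ℝ)
        + (a 4 : ℝ)*(b 4 : ℝ) + (a 5 : ℝ)*(b 5 : ℝ))) = 0 := by
    exact_mod_cast congrArg (fun t : ℚ => (t : ℝ)) hQ0
  have hsnn : (0:ℝ) ≤ s := Real.sqrt_nonneg 5
  have hs32 : (3:ℝ) < 2 * s := by nlinarith [s5]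
  have hconj : (2*s - 3) * ((a 0 : ℝ) - b 0 * s)^2
      + ((a 1:ℝ) - b 1 * s)^2 + ((a 2:ℝ) - b 2 * s)^2 + ((a 3:ℝ) - b 3 * s)^2
      + ((a 4:ℝ) - b 4 * s)^2 + ((a 5:ℝ) - b 5 * s)^2 = 0 := by
    linear_combination hP0' - s * hQ0' + (-3*(b 0:ℝ)^2 - 4*(a 0:ℝ)*(b 0:ℝ)
      + ((b 1:ℝ)^2 + (b 2:ℝ)^2 + (b 3:ℝ)^2 + (b 4:ℝ)^2 + (b 5:ℝ)^2) + 2*(b 0:ℝ)^2 * s) * s5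
  have hmul : (0:ℝ) ≤ (2*s - 3) * ((a 0 : ℝ) - b 0 * s)^2 :=
    mul_nonneg (by linarith) (sq_nonneg _)
  have n1 := sq_nonneg ((a 1:ℝ) - b 1 * s)
  have n2 := sq_nonneg ((a 2:ℝ) - b 2 * s)
  have n3 := sq_nonneg ((a 3:ℝ) - b 3 * s)
  have n4 := sq_nonneg ((a 4:ℝ) - b 4 * s)
  have n5 := sq_nonneg ((a 5:ℝ) - b 5 * s)
  have e0 : (2*s - 3) * ((a 0 : ℝ) - b 0 * s)^2 = 0 := by linarith
  have z0 : ((a 0 : ℝ) - b 0 * s)^2 = 0 := by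
    rcases mul_eq_zero.mp e0 with h | h
    · exfalso; linarith
    · exact h
  have z1 : ((a 1 : ℝ) - b 1 * s)^2 = 0 := by linarith
  have z2 : ((a 2 : ℝ) - b 2 * s)^2 = 0 := by linarith
  have z3 : ((a 3 : ℝ) - b 3 * s)^2 = 0 := by linarith
  have z4 : ((a 4 : ℝ) - b 4 * s)^2 = 0 := by linarith
  have z5 : ((a 5 : ℝ) - b 5 * s)^2 = 0 := by linarith
  have sqz : ∀ j : Fin 6, ((a j : ℝ) - b j * s)^2 = 0 := by
    intro j
    fin_cases j
    exacts [z0, z1, z2, z3, z4, z5]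
  intro i
  have hyi : (a i : ℝ) - b i * s = 0 := pow_eq_zero_iff two_ne_zero |>.mp (sqz i)
  have hrel : ((a i : ℚ) : ℝ) + ((-(b i) : ℚ) : ℝ) * s = 0 := by
    push_cast
    linarith
  obtain ⟨ha0, hb0⟩ := rat_rel hrel
  have hb0' : b i = 0 := neg_eq_zero.mp hb0
  rw [hab i, ha0, hb0']
  norm_num
end
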